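/- Let n ≥ 1, c > 0 and p > 2n/c. There exists a constant C > 0, independent of t, such that for every real t ≥ −1, ∑_{α ∈ ℕ₀ⁿ} ( B(n+|α|+t+1, c) / B(n+t+1, c) )^{p/2} ≤ C·(t+n+1)ⁿ; in particular this series converges. -/

import Mathlib

open MeasureTheory

/-- The Euler Beta function `B(x,y) = Γ(x)Γ(y)/Γ(x+y)`. -/
noncomputable def Bfun (x y : ℝ) : ℝ := Real.Gamma x * Real.Gamma y / Real.Gamma (x + y)

open Finset

/-- `log( (x+1)/x ) ≥ 1/(x+1)` for `x > 0`. -/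
private lemma log_ratio_ge {x : ℝ} (hx : 0 < x) : 1 / (x + 1) ≤ Real.log ((x + 1) / x) := by
  have h1 : (0:ℝ) < x / (x + 1) := by positivity
  have h := Real.log_le_sub_one_of_pos h1
  have h2 : Real.log (x / (x + 1)) = - Real.log ((x + 1) / x) := by
    rw [← Real.log_inv]
    congr 1
    field_simp
  have h3 : x / (x + 1) - 1 = -(1 / (x + 1)) := by field_simp; ring
  rw [h2, h3] at h
  linarith

/-- `log( (x+1)/x ) ≤ 1/x` for `x > 0`. -/
private lemma log_ratio_le {x : ℝ} (hx : 0 < x) : Real.log ((x + 1) / x) ≤ 1 / x := by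
  have h := Real.log_le_sub_one_of_pos (show (0:ℝ) < (x+1)/x by positivity)
  have : (x + 1) / x - 1 = 1 / x := by field_simp; ring
  linarith

/-- Per-factor bound: `x/(x+c) ≤ ((x+c)/(x+c+1))^c`. -/
private lemma factor_le {x c : ℝ} (hx : 0 < x) (hc : 0 < c) :
    x / (x + c) ≤ ((x + c) / (x + c + 1)) ^ c := by
  have hxc : 0 < x + c := by linarith
  have hxc1 : 0 < x + c + 1 := by linarith
  have hlhs : 0 < x / (x + c) := by positivity
  have hrb : 0 < (x + c) / (x + c + 1) := by positivity
  rw [Real.rpow_def_of_pos hrb, ← Real.exp_log hlhs]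
  apply Real.exp_le_exp.2
  -- log (x/(x+c)) ≤ c * log ((x+c)/(x+c+1))
  have h1 : Real.log (x / (x + c)) ≤ -(c / (x + c)) := by
    have h := Real.log_le_sub_one_of_pos hlhs
    have : x / (x + c) - 1 = -(c / (x + c)) := by field_simp; ring
    linarith
  have h2 : Real.log ((x + c + 1) / (x + c)) ≤ 1 / (x + c) := log_ratio_le hxc
  have h3 : Real.log ((x + c) / (x + c + 1)) = - Real.log ((x + c + 1) / (x + c)) := by
    rw [← Real.log_inv]; congr 1; field_simp
  rw [h3]
  have hcx : c * Real.log ((x + c + 1) / (x + c)) ≤ c * (1 / (x + c)) :=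
    mul_le_mul_of_nonneg_left h2 hc.le
  have : c * (1 / (x + c)) = c / (x + c) := by ring
  nlinarith

/-- Telescoping product. -/
private lemma prod_telescope (a : ℝ) (ha : 0 < a) (k : ℕ) :
    ∏ j ∈ Finset.range k, ((a + j) / (a + j + 1)) = a / (a + k) := by
  induction k with
  | zero => simp [div_self ha.ne']
  | succ k ih =>
    rw [Finset.prod_range_succ, ih]
    have h1 : a + (k:ℝ) ≠ 0 := by positivity
    have h2 : a + (k:ℝ) + 1 ≠ 0 := by positivity
    push_cast
    rw [div_mul_div_comm]
    rw [div_eq_div_iff (by positivity) (by positivity)]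
    ring

/-- Bfun recurrence. -/
private lemma Bfun_succ {x c : ℝ} (hx : 0 < x) (hc : 0 < c) :
    Bfun (x + 1) c = (x / (x + c)) * Bfun x c := by
  have hxc : 0 < x + c := by linarith
  have hG1 : Real.Gamma (x + 1) = x * Real.Gamma x := Real.Gamma_add_one hx.ne'
  have hG2 : Real.Gamma (x + 1 + c) = (x + c) * Real.Gamma (x + c) := by
    have : x + 1 + c = (x + c) + 1 := by ring
    rw [this, Real.Gamma_add_one hxc.ne']
  have hGxc : Real.Gamma (x + c) ≠ 0 := (Real.Gamma_pos_of_pos hxc).ne'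
  unfold Bfun
  rw [hG1, hG2]
  field_simp

private lemma Bfun_add_nat {a c : ℝ} (ha : 0 < a) (hc : 0 < c) (k : ℕ) :
    Bfun (a + k) c = (∏ j ∈ Finset.range k, ((a + j) / (a + j + c))) * Bfun a c := by
  induction k with
  | zero => simp
  | succ k ih =>
    have hak : 0 < a + k := by positivity
    have : a + ((k:ℕ) + 1 : ℕ) = (a + k) + 1 := by push_cast; ring
    rw [this, Bfun_succ hak hc, ih, Finset.prod_range_succ]
    ring

/-- Product ratio bound via telescoping. -/
private lemma prod_ratio_le {a c : ℝ} (ha : 0 < a) (hc : 0 < c) (k : ℕ)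
    (htel : ∀ (b : ℝ), 0 < b → ∏ j ∈ Finset.range k, ((b + j) / (b + j + 1)) = b / (b + k))
    (hfac : ∀ x : ℝ, 0 < x → x / (x + c) ≤ ((x + c) / (x + c + 1)) ^ c) :
    ∏ j ∈ Finset.range k, ((a + j) / (a + j + c)) ≤ ((a + c) / (a + c + k)) ^ c := by
  have step : ∀ j ∈ Finset.range k,
      (a + j) / (a + j + c) ≤ (((a + c) + j) / ((a + c) + j + 1)) ^ c := by
    intro j _
    have haj : 0 < a + (j:ℝ) := by positivity
    have h := hfac (a + j) haj
    have e1 : a + (j:ℝ) + c = (a + c) + j := by ring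
    rw [e1] at h ⊢
    exact h
  calc ∏ j ∈ Finset.range k, ((a + j) / (a + j + c))
      ≤ ∏ j ∈ Finset.range k, (((a + c) + j) / ((a + c) + j + 1)) ^ c := by
        apply Finset.prod_le_prod
        · intro j _
          have : (0:ℝ) < a + (j:ℝ) := by positivity
          positivity
        · exact step
    _ = (∏ j ∈ Finset.range k, (((a + c) + j) / ((a + c) + j + 1))) ^ c := by
        apply Real.finset_prod_rpow
        intro j _
        have : (0:ℝ) < a + c + (j:ℝ) := by positivity
        positivity
    _ = ((a + c) / (a + c + k)) ^ c := by rw [htel (a + c) (by linarith)]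

/-- Step inequality for the integral test. -/
private lemma step_ineq {x q : ℝ} (hx : 0 < x) (hq : 1 < q) :
    (x + 1) ^ (-q) ≤ (x ^ (1 - q) - (x + 1) ^ (1 - q)) / (q - 1) := by
  have hx1 : 0 < x + 1 := by linarith
  have hq1 : 0 < q - 1 := by linarith
  rw [le_div_iff₀ hq1]
  -- (x+1)^(-q) * (q-1) ≤ x^(1-q) - (x+1)^(1-q)
  -- key : x^(1-q) = (x+1)^(1-q) * ((x+1)/x)^(q-1)
  have hkey : x ^ (1 - q) = (x + 1) ^ (1 - q) * ((x + 1) / x) ^ (q - 1) := by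
    have e1 : (x + 1) ^ (1 - q) * (x + 1) ^ (q - 1) = 1 := by
      rw [← Real.rpow_add hx1]; norm_num
    have e2 : x ^ (1 - q) * x ^ (q - 1) = 1 := by
      rw [← Real.rpow_add hx]; norm_num
    rw [Real.div_rpow hx1.le hx.le, ← mul_div_assoc, e1,
      eq_div_iff (by positivity : (x:ℝ) ^ (q - 1) ≠ 0), e2]
  have hexp : 1 + (q - 1) / (x + 1) ≤ ((x + 1) / x) ^ (q - 1) := by
    have hlog : 1 / (x + 1) ≤ Real.log ((x + 1) / x) := log_ratio_ge hx
    have h1 : (q - 1) / (x + 1) ≤ (q - 1) * Real.log ((x + 1) / x) := by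
      have := mul_le_mul_of_nonneg_left hlog hq1.le
      calc (q - 1) / (x + 1) = (q - 1) * (1 / (x + 1)) := by ring
        _ ≤ (q - 1) * Real.log ((x + 1) / x) := this
    have h2 : ((x + 1) / x) ^ (q - 1) = Real.exp ((q - 1) * Real.log ((x + 1) / x)) := by
      rw [Real.rpow_def_of_pos (by positivity), mul_comm]
    rw [h2]
    have := Real.add_one_le_exp ((q - 1) / (x + 1))
    calc 1 + (q - 1) / (x + 1) ≤ Real.exp ((q - 1) / (x + 1)) := by linarith
      _ ≤ Real.exp ((q - 1) * Real.log ((x + 1) / x)) := Real.exp_le_exp.2 h1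
  have hpos : (0:ℝ) < (x + 1) ^ (1 - q) := Real.rpow_pos_of_pos hx1 _
  have hmul := mul_le_mul_of_nonneg_left hexp hpos.le
  rw [← hkey] at hmul
  -- hmul : (x+1)^(1-q) * (1 + (q-1)/(x+1)) ≤ x^(1-q)
  have hid : (x + 1) ^ (1 - q) * (1 + (q - 1) / (x + 1)) =
      (x + 1) ^ (1 - q) + (x + 1) ^ (-q) * (q - 1) := by
    have h3 : (x + 1) ^ (1 - q) * ((q - 1) / (x + 1)) = (x + 1) ^ (-q) * (q - 1) := by
      have e : (x + 1) ^ (-q) = (x + 1) ^ (1 - q) * (x + 1)⁻¹ := by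
        rw [show -q = (1 - q) + (-1) by ring, Real.rpow_add hx1, Real.rpow_neg_one]
      rw [e]; ring
    calc (x + 1) ^ (1 - q) * (1 + (q - 1) / (x + 1))
        = (x + 1) ^ (1 - q) + (x + 1) ^ (1 - q) * ((q - 1) / (x + 1)) := by ring
      _ = (x + 1) ^ (1 - q) + (x + 1) ^ (-q) * (q - 1) := by rw [h3]
  rw [hid] at hmul
  linarith

/-- One-dimensional tail sum bound. -/
private lemma one_dim_sum {b q : ℝ} (hb : 0 < b) (hq : 1 < q) :
    Summable (fun m : ℕ => ((m : ℝ) + b) ^ (-q)) ∧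
      (∑' m : ℕ, ((m : ℝ) + b) ^ (-q)) ≤ b ^ (-q) + b ^ (1 - q) / (q - 1) := by
  set f : ℕ → ℝ := fun m => ((m : ℝ) + b) ^ (-q) with hf
  have hfn : ∀ m, 0 ≤ f m := by
    intro m
    have : (0:ℝ) < (m : ℝ) + b := by positivity
    positivity
  have hq1 : 0 < q - 1 := by linarith
  set F : ℕ → ℝ := fun m => ((m : ℝ) + b) ^ (1 - q) with hF
  have hbound : ∀ N, ∑ m ∈ Finset.range N, f m ≤ b ^ (-q) + b ^ (1 - q) / (q - 1) := by
    intro N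
    match N with
    | 0 =>
      simp only [Finset.range_zero, Finset.sum_empty]
      have h1 : (0:ℝ) ≤ b ^ (-q) := (Real.rpow_pos_of_pos hb _).le
      have h2 : (0:ℝ) ≤ b ^ (1 - q) / (q - 1) := by
        have := (Real.rpow_pos_of_pos hb (1 - q)).le
        positivity
      linarith
    | (M + 1) =>
      rw [Finset.sum_range_succ']
      have hf0 : f 0 = b ^ (-q) := by simp [hf]
      have hstep : ∀ i : ℕ, f (i + 1) ≤ (F i - F (i + 1)) / (q - 1) := by
        intro i
        have hxi : (0:ℝ) < (i : ℝ) + b := by positivity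
        have h := step_ineq hxi hq
        have e1 : ((i : ℝ) + b) + 1 = ((i + 1 : ℕ) : ℝ) + b := by push_cast; ring
        rw [e1] at h
        exact h
      have htel : ∑ i ∈ Finset.range M, (F i - F (i + 1)) = F 0 - F M :=
        Finset.sum_range_sub' F M
      have hFnn : 0 ≤ F M := by
        have : (0:ℝ) < (M : ℝ) + b := by positivity
        exact (Real.rpow_pos_of_pos this _).le
      have hsum : ∑ i ∈ Finset.range M, f (i + 1) ≤ (F 0 - F M) / (q - 1) := by
        calc ∑ i ∈ Finset.range M, f (i + 1) ≤ ∑ i ∈ Finset.range M, (F i - F (i + 1)) / (q - 1) :=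
              Finset.sum_le_sum fun i _ => hstep i
          _ = (∑ i ∈ Finset.range M, (F i - F (i + 1))) / (q - 1) := by
              rw [Finset.sum_div]
          _ = (F 0 - F M) / (q - 1) := by rw [htel]
      have hF0 : F 0 = b ^ (1 - q) := by simp [hF]
      have hnum : F 0 - F M ≤ b ^ (1 - q) := by rw [hF0]; linarith
      have h2 : (F 0 - F M) / (q - 1) ≤ b ^ (1 - q) / (q - 1) := by gcongr
      linarith [hsum, hf0.le, hf0.ge]
  constructor
  · exact summable_of_sum_range_le hfn hbound
  · exact Real.tsum_le_of_sum_range_le hfn hbound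

/-- Summability and value of product series over `Fin n → ℕ`. -/
private lemma pi_prod_sum {g : ℕ → ℝ} (hg0 : ∀ m, 0 ≤ g m) (hg : Summable g) :
    ∀ n : ℕ, Summable (fun α : Fin n → ℕ => ∏ i, g (α i)) ∧
      (∑' α : Fin n → ℕ, ∏ i, g (α i)) = (∑' m, g m) ^ n := by
  intro n
  induction n with
  | zero =>
    constructor
    · exact Summable.of_finite
    · simp [tsum_fintype]
  | succ n ih =>
    have hprodnn : ∀ x : Fin n → ℕ, 0 ≤ ∏ i, g (x i) := fun x =>
      Finset.prod_nonneg fun i _ => hg0 _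
    have hsumh : Summable (fun x : ℕ × (Fin n → ℕ) => g x.1 * ∏ i, g (x.2 i)) :=
      Summable.mul_of_nonneg (f := g) (g := fun x : Fin n → ℕ => ∏ i, g (x i)) hg ih.1 hg0 hprodnn
    have hcomp : (fun α : Fin (n+1) → ℕ => ∏ i, g (α i)) =
        (fun x : ℕ × (Fin n → ℕ) => g x.1 * ∏ i, g (x.2 i)) ∘ (Fin.consEquiv (fun _ : Fin (n+1) => ℕ)).symm := by
      funext α
      simp only [Function.comp_apply, Fin.consEquiv, Equiv.coe_fn_symm_mk]
      rw [Fin.prod_univ_succ]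
      rfl
    constructor
    · rw [hcomp]
      exact ((Fin.consEquiv (fun _ : Fin (n+1) => ℕ)).symm.summable_iff).2 hsumh
    · rw [hcomp]
      have h1 := (Fin.consEquiv (fun _ : Fin (n+1) => ℕ)).symm.tsum_eq
        (fun x : ℕ × (Fin n → ℕ) => g x.1 * ∏ i, g (x.2 i))
      rw [show ∑' (α : Fin (n+1) → ℕ),
          ((fun x : ℕ × (Fin n → ℕ) => g x.1 * ∏ i, g (x.2 i)) ∘ (Fin.consEquiv (fun _ : Fin (n+1) => ℕ)).symm) α
          = ∑' x : ℕ × (Fin n → ℕ), g x.1 * ∏ i, g (x.2 i) from h1]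
      rw [← Summable.tsum_mul_tsum (f := g) (g := fun x : Fin n → ℕ => ∏ i, g (x i)) hg ih.1 hsumh, ih.2, pow_succ]
      ring

/-- AM-GM bound. -/
private lemma amgm_bound {n : ℕ} (hn : 1 ≤ n) {b s : ℝ} (hb : 0 < b) (hs : 0 ≤ s)
    (α : Fin n → ℕ) :
    ((n : ℝ) * b + ∑ i, (α i : ℝ)) ^ (-s) ≤
      (n : ℝ) ^ (-s) * ∏ i, ((α i : ℝ) + b) ^ (-(s / n)) := by
  have hn' : (0:ℝ) < n := by exact_mod_cast hn
  set z : Fin n → ℝ := fun i => (α i : ℝ) + b with hz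
  have hzpos : ∀ i, 0 < z i := fun i => by positivity
  set T : ℝ := (n : ℝ) * b + ∑ i, (α i : ℝ) with hT
  have hTpos : 0 < T := by
    have : 0 ≤ ∑ i, (α i : ℝ) := Finset.sum_nonneg fun i _ => by positivity
    have : 0 < (n:ℝ) * b := by positivity
    rw [hT]; linarith [Finset.sum_nonneg (fun i (_ : i ∈ Finset.univ) => by positivity : ∀ i ∈ Finset.univ, (0:ℝ) ≤ (α i : ℝ))]
  -- AM-GM
  have hamgm : ∏ i, z i ^ ((n:ℝ)⁻¹) ≤ T / n := by
    have h := Real.geom_mean_le_arith_mean_weighted Finset.univ (fun _ => (n:ℝ)⁻¹) z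
      (fun i _ => by positivity) (by simp [Finset.card_univ]; field_simp)
      (fun i _ => (hzpos i).le)
    calc ∏ i, z i ^ ((n:ℝ)⁻¹) ≤ ∑ i, (n:ℝ)⁻¹ * z i := h
      _ = T / n := by
          rw [← Finset.mul_sum]
          rw [hT, hz]
          rw [Finset.sum_add_distrib]
          simp [Finset.sum_const, Finset.card_univ]
          field_simp
          ring
  set P : ℝ := ∏ i, z i ^ ((n:ℝ)⁻¹) with hP
  have hPpos : 0 < P := Finset.prod_pos fun i _ => Real.rpow_pos_of_pos (hzpos i) _
  have hPs : P ^ s = ∏ i, z i ^ (s / n) := by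
    rw [hP, ← Real.finset_prod_rpow _ _ (fun i _ => (Real.rpow_pos_of_pos (hzpos i) _).le)]
    apply Finset.prod_congr rfl
    intro i _
    rw [← Real.rpow_mul (hzpos i).le]
    congr 1
    field_simp
  have hmono : P ^ s ≤ (T / n) ^ s := Real.rpow_le_rpow hPpos.le hamgm hs
  have hTn : (T / n) ^ s = T ^ s / (n:ℝ) ^ s := Real.div_rpow hTpos.le hn'.le s
  -- conclude
  have hinv : T ^ (-s) ≤ (n:ℝ) ^ (-s) * (P ^ s)⁻¹ := by
    have hPs' : 0 < P ^ s := Real.rpow_pos_of_pos hPpos s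
    have hTs : 0 < T ^ s := Real.rpow_pos_of_pos hTpos s
    have hns : 0 < (n:ℝ) ^ s := Real.rpow_pos_of_pos hn' s
    have h1 : (n:ℝ) ^ s * P ^ s ≤ T ^ s := by
      rw [hTn] at hmono
      calc (n:ℝ) ^ s * P ^ s ≤ (n:ℝ) ^ s * (T ^ s / (n:ℝ) ^ s) := by
            exact mul_le_mul_of_nonneg_left hmono hns.le
        _ = T ^ s := by field_simp
    rw [Real.rpow_neg hTpos.le, Real.rpow_neg hn'.le]
    rw [← mul_inv]
    exact inv_anti₀ (by positivity) h1
  have hprodinv : (P ^ s)⁻¹ = ∏ i, z i ^ (-(s / n)) := by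
    rw [hPs, ← Finset.prod_inv_distrib]
    apply Finset.prod_congr rfl
    intro i _
    rw [Real.rpow_neg (hzpos i).le]
  rw [hprodinv] at hinv
  exact hinv


set_option maxHeartbeats 1000000 in
/-- Uniform (in `t ≥ −1`) bound for the Schatten-norm series of the embedding
operators: for `c > 0` and `p > 2n/c`,
`∑_{α ∈ ℕ₀ⁿ} (B(n+|α|+t+1,c)/B(n+t+1,c))^{p/2} ≤ C (t+n+1)ⁿ`. -/
theorem stmt12 (n : ℕ) (hn : 1 ≤ n) (c p : ℝ) (hc : 0 < c) (hp : 2 * n / c < p) :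
    ∃ C : ℝ, 0 < C ∧ ∀ t : ℝ, -1 ≤ t →
      (Summable fun α : Fin n → ℕ =>
        (Bfun ((n : ℝ) + (∑ i, α i : ℕ) + t + 1) c / Bfun ((n : ℝ) + t + 1) c) ^ (p / 2)) ∧
      (∑' α : Fin n → ℕ,
          (Bfun ((n : ℝ) + (∑ i, α i : ℕ) + t + 1) c / Bfun ((n : ℝ) + t + 1) c) ^ (p / 2))
        ≤ C * (t + n + 1) ^ n := by
  have hn0 : (0:ℝ) < n := by exact_mod_cast hn
  have hn1 : (1:ℝ) ≤ n := by exact_mod_cast hn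
  set s : ℝ := c * (p / 2) with hs_def
  have h2nc : 2 * (n:ℝ) < p * c := by
    rw [div_lt_iff₀ hc] at hp
    linarith
  have hs : (n:ℝ) < s := by rw [hs_def]; nlinarith
  have hs0 : 0 < s := lt_trans hn0 hs
  have hp2 : 0 ≤ p / 2 := by
    rcases le_or_gt p 0 with h | h
    · exfalso; nlinarith
    · positivity
  set q : ℝ := s / n with hq_def
  have hq : 1 < q := by
    rw [hq_def, lt_div_iff₀ hn0]; linarith
  set E : ℝ := 1 + 1 / (q - 1) with hE_def
  have hE : 0 < E := by
    have : 0 < q - 1 := by linarith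
    have : 0 < 1 / (q - 1) := by positivity
    rw [hE_def]; linarith
  have h1c : (0:ℝ) < 1 + c := by linarith
  set C : ℝ := Real.exp (s * Real.log (1 + c) + n * Real.log E - n * Real.log n) with hC_def
  refine ⟨C, Real.exp_pos _, fun t ht => ?_⟩
  set a : ℝ := (n:ℝ) + t + 1 with ha_def
  have ha_n : (n:ℝ) ≤ a := by rw [ha_def]; linarith
  have ha1 : (1:ℝ) ≤ a := le_trans hn1 ha_n
  have ha0 : (0:ℝ) < a := lt_of_lt_of_le one_pos ha1
  set b : ℝ := a / n with hb_def
  have hb0 : 0 < b := by rw [hb_def]; positivity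
  have hb1 : 1 ≤ b := by rw [hb_def, le_div_iff₀ hn0]; linarith
  set g : ℕ → ℝ := fun m => ((m:ℝ) + b) ^ (-q) with hg_def
  have hg0 : ∀ m, 0 ≤ g m := fun m => by
    have : (0:ℝ) < (m:ℝ) + b := by positivity
    exact (Real.rpow_pos_of_pos this _).le
  obtain ⟨hgsum, hgbound⟩ := one_dim_sum hb0 hq
  obtain ⟨hpisum, hpitsum⟩ := pi_prod_sum hg0 hgsum n
  set K : ℝ := ((1 + c) * a) ^ s * (n:ℝ) ^ (-s) with hK_def
  have hK0 : 0 ≤ K := by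
    rw [hK_def]
    have := (Real.rpow_pos_of_pos (mul_pos h1c ha0) s).le
    have := (Real.rpow_pos_of_pos hn0 (-s)).le
    positivity
  have hBa : 0 < Bfun a c := by
    unfold Bfun
    exact div_pos (mul_pos (Real.Gamma_pos_of_pos ha0) (Real.Gamma_pos_of_pos hc))
      (Real.Gamma_pos_of_pos (by linarith))
  -- the per-α bound
  have hterm_nonneg : ∀ α : Fin n → ℕ,
      0 ≤ (Bfun ((n : ℝ) + (∑ i, α i : ℕ) + t + 1) c / Bfun ((n : ℝ) + t + 1) c) ^ (p / 2) := by
    intro α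
    exact Real.rpow_nonneg (by
      have hk : ((n : ℝ) + (∑ i, α i : ℕ) + t + 1) = a + ((∑ i, α i : ℕ) : ℝ) := by
        rw [ha_def]; push_cast; ring
      rw [hk, Bfun_add_nat ha0 hc, mul_div_assoc, div_self hBa.ne', mul_one]
      exact Finset.prod_nonneg fun j _ => by
        have h1 : (0:ℝ) < a + j := by positivity
        have h2 : (0:ℝ) < a + j + c := by positivity
        positivity) _
  have hterm_le : ∀ α : Fin n → ℕ,
      (Bfun ((n : ℝ) + (∑ i, α i : ℕ) + t + 1) c / Bfun ((n : ℝ) + t + 1) c) ^ (p / 2)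
        ≤ K * ∏ i, g (α i) := by
    intro α
    set k : ℕ := ∑ i, α i with hk_def
    have hk : ((n : ℝ) + (k : ℕ) + t + 1) = a + (k : ℝ) := by
      rw [ha_def]; push_cast; ring
    rw [hk]
    have hr_eq : Bfun (a + (k:ℝ)) c / Bfun a c
        = ∏ j ∈ Finset.range k, ((a + j) / (a + j + c)) := by
      rw [Bfun_add_nat ha0 hc, mul_div_assoc, div_self hBa.ne', mul_one]
    have hr_nonneg : 0 ≤ ∏ j ∈ Finset.range k, ((a + j) / (a + j + c)) :=
      Finset.prod_nonneg fun j _ => by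
        have h1 : (0:ℝ) < a + j := by positivity
        have h2 : (0:ℝ) < a + j + c := by positivity
        positivity
    have h1 : ∏ j ∈ Finset.range k, ((a + j) / (a + j + c)) ≤ ((a + c) / (a + c + k)) ^ c :=
      prod_ratio_le ha0 hc k (fun x hx => prod_telescope x hx k)
        (fun x hx => factor_le hx hc)
    have hk0 : (0:ℝ) ≤ k := Nat.cast_nonneg k
    have hbase : (a + c) / (a + c + k) ≤ ((1 + c) * a) / (a + k) := by
      rw [div_le_div_iff₀ (by positivity) (by positivity)]
      nlinarith [mul_nonneg (mul_nonneg hc.le hk0) (sub_nonneg.2 ha1),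
        mul_pos (mul_pos hc ha0) ha0, mul_pos hc (mul_pos ha0 hc)]
    have h2 : ((a + c) / (a + c + k)) ^ c ≤ (((1 + c) * a) / (a + k)) ^ c :=
      Real.rpow_le_rpow (by positivity) hbase hc.le
    have hX0 : (0:ℝ) ≤ ((1 + c) * a) / (a + k) := by positivity
    have h3 : (Bfun (a + (k:ℝ)) c / Bfun a c) ^ (p / 2)
        ≤ ((((1 + c) * a) / (a + k)) ^ c) ^ (p / 2) := by
      rw [hr_eq]
      exact Real.rpow_le_rpow hr_nonneg (le_trans h1 h2) hp2
    have h4 : ((((1 + c) * a) / (a + k)) ^ c) ^ (p / 2) = (((1 + c) * a) / (a + k)) ^ s := by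
      rw [hs_def, ← Real.rpow_mul hX0]
    have h5 : (((1 + c) * a) / (a + k)) ^ s = ((1 + c) * a) ^ s * (a + (k:ℝ)) ^ (-s) := by
      rw [Real.div_rpow (by positivity) (by positivity), Real.rpow_neg (by positivity),
        div_eq_mul_inv]
    have hnb : (n:ℝ) * b = a := by rw [hb_def]; field_simp
    have h6 : (a + (k:ℝ)) ^ (-s) ≤ (n:ℝ) ^ (-s) * ∏ i, ((α i : ℝ) + b) ^ (-(s / n)) := by
      have := amgm_bound hn hb0 hs0.le α
      rw [hnb] at this
      have hks : ∑ i, ((α i : ℕ) : ℝ) = (k:ℝ) := by rw [hk_def]; push_cast; rfl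
      rwa [hks] at this
    have h7 : ∏ i, ((α i : ℝ) + b) ^ (-(s / n)) = ∏ i, g (α i) := by
      apply Finset.prod_congr rfl
      intro i _
      rw [hg_def, hq_def]
    calc (Bfun (a + (k:ℝ)) c / Bfun a c) ^ (p / 2)
        ≤ ((((1 + c) * a) / (a + k)) ^ c) ^ (p / 2) := h3
      _ = ((1 + c) * a) ^ s * (a + (k:ℝ)) ^ (-s) := by rw [h4, h5]
      _ ≤ ((1 + c) * a) ^ s * ((n:ℝ) ^ (-s) * ∏ i, ((α i : ℝ) + b) ^ (-(s / n))) := by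
          exact mul_le_mul_of_nonneg_left h6 (Real.rpow_pos_of_pos (mul_pos h1c ha0) s).le
      _ = K * ∏ i, g (α i) := by rw [h7, hK_def]; ring
  have hKsum : Summable (fun α : Fin n → ℕ => K * ∏ i, g (α i)) := hpisum.mul_left K
  have hsummable : Summable fun α : Fin n → ℕ =>
      (Bfun ((n : ℝ) + (∑ i, α i : ℕ) + t + 1) c / Bfun ((n : ℝ) + t + 1) c) ^ (p / 2) :=
    Summable.of_nonneg_of_le hterm_nonneg hterm_le hKsum
  refine ⟨hsummable, ?_⟩
  have htsum1 : (∑' α : Fin n → ℕ,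
      (Bfun ((n : ℝ) + (∑ i, α i : ℕ) + t + 1) c / Bfun ((n : ℝ) + t + 1) c) ^ (p / 2))
        ≤ ∑' α : Fin n → ℕ, K * ∏ i, g (α i) :=
    Summable.tsum_le_tsum hterm_le hsummable hKsum
  have htsum2 : (∑' α : Fin n → ℕ, K * ∏ i, g (α i)) = K * (∑' m, g m) ^ n := by
    rw [tsum_mul_left, hpitsum]
  have hgb : (∑' m, g m) ≤ b ^ (1 - q) * E := by
    have h1 : b ^ (-q) ≤ b ^ (1 - q) :=
      Real.rpow_le_rpow_of_exponent_le hb1 (by linarith)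
    have h2 : b ^ (1 - q) * E = b ^ (1 - q) + b ^ (1 - q) * (1 / (q - 1)) := by
      rw [hE_def]; ring
    have h3 : b ^ (1 - q) / (q - 1) = b ^ (1 - q) * (1 / (q - 1)) := by ring
    calc (∑' m, g m) ≤ b ^ (-q) + b ^ (1 - q) / (q - 1) := hgbound
      _ ≤ b ^ (1 - q) + b ^ (1 - q) * (1 / (q - 1)) := by rw [← h3] at *; linarith
      _ = b ^ (1 - q) * E := h2.symm
  have hgnn : 0 ≤ ∑' m, g m := tsum_nonneg hg0
  have hpow : (∑' m, g m) ^ n ≤ (b ^ (1 - q) * E) ^ n := pow_le_pow_left₀ hgnn hgb n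
  have hfinal : K * (b ^ (1 - q) * E) ^ n = C * a ^ n := by
    have hbq : 0 < b ^ (1 - q) := Real.rpow_pos_of_pos hb0 _
    rw [hK_def, hC_def,
      Real.rpow_def_of_pos (mul_pos h1c ha0), Real.rpow_def_of_pos hn0,
      ← Real.exp_log (pow_pos (mul_pos hbq hE) n),
      ← Real.exp_log (pow_pos ha0 n),
      Real.log_pow, Real.log_pow,
      ← Real.exp_add, ← Real.exp_add, ← Real.exp_add, Real.exp_eq_exp,
      Real.log_mul h1c.ne' ha0.ne', Real.log_mul hbq.ne' hE.ne',
      Real.log_rpow hb0, hb_def, Real.log_div ha0.ne' hn0.ne', hq_def]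
    field_simp
    ring
  have hrhs : t + (n:ℝ) + 1 = a := by rw [ha_def]; ring
  calc (∑' α : Fin n → ℕ,
      (Bfun ((n : ℝ) + (∑ i, α i : ℕ) + t + 1) c / Bfun ((n : ℝ) + t + 1) c) ^ (p / 2))
      ≤ K * (∑' m, g m) ^ n := by rw [← htsum2]; exact htsum1
    _ ≤ K * (b ^ (1 - q) * E) ^ n := mul_le_mul_of_nonneg_left hpow hK0
    _ = C * a ^ n := hfinal
    _ = C * (t + n + 1) ^ n := by rw [hrhs]
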